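/- Let H be the Marchenko–Pastur law with γ > 1 and σ > 0. If ρ ∈ (0, 1/λ₊) satisfies ρ² ∫ s/((1 − ρs)²(s + σ²)) dH(s) = ∫ 1/(s(s + σ²)) dH(s), then ρ ≥ 1/(2λ₊), and the quantity ε²_{σ,ols} := ∫ σ⁴/((1 − ρs)²(s + σ²)) dH(s) satisfies ε_σ² < ε²_{σ,ols} ≤ (4λ₊²/λ₋²) ε_σ², where ε_σ² = ∫ σ⁴/(s + σ²) dH(s). -/

import Mathlib

open MeasureTheory Real Filter

/-- Lower edge `λ₋ = (1 − 1/√γ)²` of the Marchenko–Pastur law. -/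
noncomputable def lamM (γ : ℝ) : ℝ := (1 - 1 / Real.sqrt γ) ^ 2

/-- Upper edge `λ₊ = (1 + 1/√γ)²` of the Marchenko–Pastur law. -/
noncomputable def lamP (γ : ℝ) : ℝ := (1 + 1 / Real.sqrt γ) ^ 2

/-- The Marchenko–Pastur law with aspect ratio `γ > 1`:
`dH(s) = (γ/(2π))·√((λ₊ − s)(s − λ₋))/s · 𝟙_{[λ₋,λ₊]}(s) ds`. -/
noncomputable def MPlaw (γ : ℝ) : Measure ℝ :=
  MeasureTheory.volume.withDensity fun s =>
    ENNReal.ofReal (if lamM γ ≤ s ∧ s ≤ lamP γ then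
      γ / (2 * Real.pi) * Real.sqrt ((lamP γ - s) * (s - lamM γ)) / s else 0)

noncomputable def dens (γ : ℝ) (s : ℝ) : ℝ :=
  if lamM γ ≤ s ∧ s ≤ lamP γ then
    γ / (2 * Real.pi) * Real.sqrt ((lamP γ - s) * (s - lamM γ)) / s else 0

lemma MPlaw_eq (γ : ℝ) : MPlaw γ = MeasureTheory.volume.withDensity
    (fun s => ENNReal.ofReal (dens γ s)) := rfl

lemma invsq_mem (hγ : 1 < γ) : 0 < 1 / Real.sqrt γ ∧ 1 / Real.sqrt γ < 1 := by
  have h1 : 1 < Real.sqrt γ := by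
    have := Real.sqrt_lt_sqrt (by norm_num) hγ
    simpa using this
  constructor
  · positivity
  · rw [div_lt_one (by linarith)]; exact h1

lemma lamM_pos {γ : ℝ} (hγ : 1 < γ) : 0 < lamM γ := by
  obtain ⟨h0, h1⟩ := invsq_mem hγ
  have : 0 < 1 - 1 / Real.sqrt γ := by linarith
  unfold lamM; positivity

lemma lamM_lt_lamP {γ : ℝ} (hγ : 1 < γ) : lamM γ < lamP γ := by
  obtain ⟨h0, h1⟩ := invsq_mem hγ
  unfold lamM lamP; nlinarith

lemma lamP_pos {γ : ℝ} (hγ : 1 < γ) : 0 < lamP γ :=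
  (lamM_pos hγ).trans (lamM_lt_lamP hγ)

lemma dens_nonneg {γ : ℝ} (hγ : 1 < γ) (s : ℝ) : 0 ≤ dens γ s := by
  unfold dens
  split_ifs with h
  · have hs : 0 < s := lt_of_lt_of_le (lamM_pos hγ) h.1
    have hγ0 : (0:ℝ) < γ := by linarith
    have hπ : (0:ℝ) < Real.pi := Real.pi_pos
    have := Real.sqrt_nonneg ((lamP γ - s) * (s - lamM γ))
    positivity
  · exact le_refl 0

lemma dens_zero_of_not_mem {γ : ℝ} {s : ℝ} (h : s ∉ Set.Icc (lamM γ) (lamP γ)) :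
    dens γ s = 0 := by
  unfold dens
  rw [if_neg]
  rwa [← Set.mem_Icc]

lemma dens_le {γ : ℝ} (hγ : 1 < γ) (s : ℝ) :
    dens γ s ≤ γ / (2 * Real.pi) * lamP γ / lamM γ := by
  have hM := lamM_pos hγ
  have hP := lamP_pos hγ
  have hπ : (0:ℝ) < Real.pi := Real.pi_pos
  have hγ0 : (0:ℝ) < γ := by linarith
  unfold dens
  split_ifs with h
  · have hsq : Real.sqrt ((lamP γ - s) * (s - lamM γ)) ≤ lamP γ := by
      have h2 : (lamP γ - s) * (s - lamM γ) ≤ lamP γ ^ 2 := by nlinarith [h.1, h.2, hM, hP]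
      calc Real.sqrt ((lamP γ - s) * (s - lamM γ)) ≤ Real.sqrt (lamP γ ^ 2) := Real.sqrt_le_sqrt h2
        _ = lamP γ := Real.sqrt_sq hP.le
    apply div_le_div₀ (by positivity) _ hM h.1
    apply mul_le_mul_of_nonneg_left hsq (by positivity)
  · positivity

lemma dens_pos {γ : ℝ} (hγ : 1 < γ) {s : ℝ} (h : s ∈ Set.Ioo (lamM γ) (lamP γ)) :
    0 < dens γ s := by
  have hM := lamM_pos hγ
  have hπ : (0:ℝ) < Real.pi := Real.pi_pos
  have hγ0 : (0:ℝ) < γ := by linarith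
  have hs : 0 < s := hM.trans h.1
  unfold dens
  rw [if_pos ⟨h.1.le, h.2.le⟩]
  have h1 : 0 < (lamP γ - s) * (s - lamM γ) := by nlinarith [h.1, h.2]
  have := Real.sqrt_pos.mpr h1
  positivity

lemma dens_measurable (γ : ℝ) : Measurable (dens γ) := by
  unfold dens
  apply Measurable.ite
  · exact measurableSet_Icc (a := lamM γ) (b := lamP γ)
  · fun_prop
  · fun_prop

lemma dens_ennreal_measurable (γ : ℝ) :
    Measurable (fun s => ENNReal.ofReal (dens γ s)) :=
  ENNReal.measurable_ofReal.comp (dens_measurable γ)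

lemma MP_compl_zero {γ : ℝ} (hγ : 1 < γ) :
    MPlaw γ (Set.Icc (lamM γ) (lamP γ))ᶜ = 0 := by
  rw [MPlaw_eq, withDensity_apply _ measurableSet_Icc.compl]
  rw [setLIntegral_congr_fun measurableSet_Icc.compl
    (fun x hx => by rw [dens_zero_of_not_mem hx, ENNReal.ofReal_zero])]
  simp

lemma MP_ae_Icc {γ : ℝ} (hγ : 1 < γ) :
    ∀ᵐ s ∂(MPlaw γ), s ∈ Set.Icc (lamM γ) (lamP γ) := by
  rw [ae_iff]
  convert MP_compl_zero hγ using 2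
  rfl

lemma MP_univ_pos {γ : ℝ} (hγ : 1 < γ) : 0 < MPlaw γ Set.univ := by
  rw [MPlaw_eq, withDensity_apply _ MeasurableSet.univ, setLIntegral_univ]
  rw [lintegral_pos_iff_support (dens_ennreal_measurable γ)]
  have hsub : Set.Ioo (lamM γ) (lamP γ) ⊆
      Function.support (fun s => ENNReal.ofReal (dens γ s)) := by
    intro x hx
    simp only [Function.mem_support, ne_eq]
    intro hc
    have := dens_pos hγ hx
    rw [← ENNReal.ofReal_zero] at hc
    have h0 : ENNReal.ofReal (dens γ x) ≠ 0 := by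
      simp only [ne_eq, ENNReal.ofReal_eq_zero, not_le]
      exact this
    exact h0 (by simpa using hc)
  calc (0:ENNReal) < volume (Set.Ioo (lamM γ) (lamP γ)) := by
        rw [Real.volume_Ioo]
        exact ENNReal.ofReal_pos.mpr (by linarith [lamM_lt_lamP hγ])
    _ ≤ _ := measure_mono hsub

lemma MP_integrable {γ : ℝ} (hγ : 1 < γ) {f : ℝ → ℝ} (hf : Measurable f) {C : ℝ}
    (hC : ∀ s ∈ Set.Icc (lamM γ) (lamP γ), |f s| ≤ C) :
    Integrable f (MPlaw γ) := by
  have hC0 : 0 ≤ C := le_trans (abs_nonneg _)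
    (hC (lamM γ) ⟨le_refl _, (lamM_lt_lamP hγ).le⟩)
  rw [MPlaw_eq, integrable_withDensity_iff (dens_ennreal_measurable γ)
    (ae_of_all _ (fun x => ENNReal.ofReal_lt_top))]
  have heq : (fun x => f x * (ENNReal.ofReal (dens γ x)).toReal)
      = fun x => f x * dens γ x :=
    funext fun x => by rw [ENNReal.toReal_ofReal (dens_nonneg hγ x)]
  rw [heq]
  set Cd : ℝ := γ / (2 * Real.pi) * lamP γ / lamM γ with hCd
  have hCd0 : 0 ≤ Cd := le_trans (dens_nonneg hγ (lamM γ)) (dens_le hγ (lamM γ))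
  apply Integrable.mono'
    (g := Set.indicator (Set.Icc (lamM γ) (lamP γ)) (fun _ => C * Cd))
  · exact ((integrableOn_const_iff (C := C * Cd) enorm_ne_top).mpr (Or.inr measure_Icc_lt_top)).integrable_indicator
      measurableSet_Icc
  · exact (hf.mul (dens_measurable γ)).aestronglyMeasurable
  · apply ae_of_all
    intro x
    by_cases hx : x ∈ Set.Icc (lamM γ) (lamP γ)
    · rw [Set.indicator_of_mem hx, norm_mul]
      apply mul_le_mul (hC x hx) _ (norm_nonneg _) hC0
      rw [Real.norm_eq_abs, abs_of_nonneg (dens_nonneg hγ x)]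
      exact dens_le hγ x
    · rw [Set.indicator_of_notMem hx, dens_zero_of_not_mem hx, mul_zero, norm_zero]

lemma MP_integral_pos {γ : ℝ} (hγ : 1 < γ) {f : ℝ → ℝ}
    (hInt : Integrable f (MPlaw γ))
    (hpos : ∀ s ∈ Set.Icc (lamM γ) (lamP γ), 0 < f s) :
    0 < ∫ s, f s ∂(MPlaw γ) := by
  rw [integral_pos_iff_support_of_nonneg_ae
    ((MP_ae_Icc hγ).mono (fun x hx => (hpos x hx).le)) hInt]
  have hsub : Set.Icc (lamM γ) (lamP γ) ⊆ Function.support f :=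
    fun x hx => (hpos x hx).ne'
  have hIccpos : 0 < MPlaw γ (Set.Icc (lamM γ) (lamP γ)) := by
    by_contra hcon
    push_neg at hcon
    have h0 : MPlaw γ (Set.Icc (lamM γ) (lamP γ)) = 0 := le_antisymm hcon (zero_le)
    have := MP_univ_pos hγ
    have huniv : MPlaw γ Set.univ ≤ MPlaw γ (Set.Icc (lamM γ) (lamP γ))
        + MPlaw γ (Set.Icc (lamM γ) (lamP γ))ᶜ := by
      rw [← Set.union_compl_self (Set.Icc (lamM γ) (lamP γ))]
      exact measure_union_le _ _
    rw [h0, MP_compl_zero hγ, add_zero] at huniv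
    exact absurd (lt_of_lt_of_le this huniv) (lt_irrefl _)
  exact lt_of_lt_of_le hIccpos (measure_mono hsub)

lemma MP_integral_lt {γ : ℝ} (hγ : 1 < γ) {f g : ℝ → ℝ}
    (hf : Integrable f (MPlaw γ)) (hg : Integrable g (MPlaw γ))
    (h : ∀ s ∈ Set.Icc (lamM γ) (lamP γ), f s < g s) :
    ∫ s, f s ∂(MPlaw γ) < ∫ s, g s ∂(MPlaw γ) := by
  have := MP_integral_pos hγ (f := fun s => g s - f s) (hg.sub hf)
    (fun s hs => sub_pos.mpr (h s hs))
  rw [integral_sub hg hf] at this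
  linarith

lemma MP_integral_le {γ : ℝ} (hγ : 1 < γ) {f g : ℝ → ℝ}
    (hf : Integrable f (MPlaw γ)) (hg : Integrable g (MPlaw γ))
    (h : ∀ s ∈ Set.Icc (lamM γ) (lamP γ), f s ≤ g s) :
    ∫ s, f s ∂(MPlaw γ) ≤ ∫ s, g s ∂(MPlaw γ) :=
  integral_mono_ae hf hg ((MP_ae_Icc hγ).mono (fun x hx => h x hx))


set_option maxHeartbeats 2000000 in
/-- If `ρ ∈ (0, 1/λ₊)` solves `ρ²∫ s/((1 − ρs)²(s + σ²)) dH = ∫ 1/(s(s + σ²)) dH`,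
then `ρ ≥ 1/(2λ₊)` and `ε²_{σ,ols} := ∫ σ⁴/((1 − ρs)²(s + σ²)) dH` satisfies
`ε_σ² < ε²_{σ,ols} ≤ (4λ₊²/λ₋²)·ε_σ²` for `ε_σ² = ∫ σ⁴/(s + σ²) dH`. -/
theorem stmt15 (γ σ ρ : ℝ) (hγ : 1 < γ) (hσ : 0 < σ)
    (hρ : ρ ∈ Set.Ioo 0 (1 / lamP γ))
    (heq : ρ ^ 2 * ∫ s, s / ((1 - ρ * s) ^ 2 * (s + σ ^ 2)) ∂(MPlaw γ)
      = ∫ s, 1 / (s * (s + σ ^ 2)) ∂(MPlaw γ)) :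
    1 / (2 * lamP γ) ≤ ρ ∧
    (∫ s, σ ^ 4 / (s + σ ^ 2) ∂(MPlaw γ))
      < (∫ s, σ ^ 4 / ((1 - ρ * s) ^ 2 * (s + σ ^ 2)) ∂(MPlaw γ)) ∧
    (∫ s, σ ^ 4 / ((1 - ρ * s) ^ 2 * (s + σ ^ 2)) ∂(MPlaw γ))
      ≤ (4 * lamP γ ^ 2 / lamM γ ^ 2) * ∫ s, σ ^ 4 / (s + σ ^ 2) ∂(MPlaw γ) := by
  obtain ⟨hρ0, hρ1⟩ := hρ
  set M := lamM γ with hMdef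
  set L := lamP γ with hLdef
  have hM : 0 < M := lamM_pos hγ
  have hML : M < L := lamM_lt_lamP hγ
  have hL : 0 < L := hM.trans hML
  have hρL : ρ * L < 1 := by
    rw [lt_div_iff₀ hL] at hρ1; linarith
  have hδ : 0 < 1 - ρ * L := by linarith
  have hσ2 : (0:ℝ) < σ ^ 2 := by positivity
  -- pointwise facts on the support
  have hfacts : ∀ s ∈ Set.Icc M L, 0 < s ∧ 0 < 1 - ρ * s ∧ 1 - ρ * L ≤ 1 - ρ * s
      ∧ 0 < s + σ ^ 2 ∧ ρ * s < 1 := by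
    intro s hs
    obtain ⟨hs1, hs2⟩ := hs
    have hs0 : 0 < s := hM.trans_le hs1
    have h1 : ρ * s ≤ ρ * L := by nlinarith
    exact ⟨hs0, by linarith, by linarith, by linarith, by linarith⟩
  -- integrability of the four integrands
  have hI1 : Integrable (fun s => s / ((1 - ρ * s) ^ 2 * (s + σ ^ 2))) (MPlaw γ) := by
    apply MP_integrable hγ (by fun_prop) (C := L / ((1 - ρ * L) ^ 2 * σ ^ 2))
    intro s hs
    obtain ⟨h0, h1, h2, h3, h4⟩ := hfacts s hs
    obtain ⟨hs1, hs2⟩ := hs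
    rw [abs_of_nonneg (div_nonneg h0.le (mul_pos (pow_pos h1 2) h3).le)]
    gcongr <;> linarith
  have hI2 : Integrable (fun s => 1 / (s * (s + σ ^ 2))) (MPlaw γ) := by
    apply MP_integrable hγ (by fun_prop) (C := 1 / (M * σ ^ 2))
    intro s hs
    obtain ⟨h0, h1, h2, h3, h4⟩ := hfacts s hs
    obtain ⟨hs1, hs2⟩ := hs
    rw [abs_of_nonneg (div_nonneg zero_le_one (mul_pos h0 h3).le)]
    gcongr <;> linarith
  have hI3 : Integrable (fun s => σ ^ 4 / (s + σ ^ 2)) (MPlaw γ) := by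
    apply MP_integrable hγ (by fun_prop) (C := σ ^ 4 / σ ^ 2)
    intro s hs
    obtain ⟨h0, h1, h2, h3, h4⟩ := hfacts s hs
    obtain ⟨hs1, hs2⟩ := hs
    rw [abs_of_nonneg (div_nonneg (by positivity) h3.le)]
    gcongr <;> linarith
  have hI4 : Integrable (fun s => σ ^ 4 / ((1 - ρ * s) ^ 2 * (s + σ ^ 2))) (MPlaw γ) := by
    apply MP_integrable hγ (by fun_prop) (C := σ ^ 4 / ((1 - ρ * L) ^ 2 * σ ^ 2))
    intro s hs
    obtain ⟨h0, h1, h2, h3, h4⟩ := hfacts s hs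
    obtain ⟨hs1, hs2⟩ := hs
    rw [abs_of_nonneg (div_nonneg (by positivity) (mul_pos (pow_pos h1 2) h3).le)]
    gcongr <;> linarith
  -- Part 1 : ρ ≥ 1/(2 λ₊)
  have hpart1 : 1 / (2 * L) ≤ ρ := by
    by_contra hcon
    push_neg at hcon
    have hpw : ∀ s ∈ Set.Icc M L,
        ρ ^ 2 * (s / ((1 - ρ * s) ^ 2 * (s + σ ^ 2))) < 1 / (s * (s + σ ^ 2)) := by
      intro s hs
      obtain ⟨h0, h1, h2, h3, h4⟩ := hfacts s hs
      have hhalf : ρ * s < 1 / 2 := by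
        have : ρ * s ≤ ρ * L := by nlinarith
        have : ρ * L < 1 / 2 := by
          rw [lt_div_iff₀ (by linarith : (0:ℝ) < 2 * L)] at hcon
          nlinarith
        linarith
      have hps : 0 < ρ * s := mul_pos hρ0 h0
      have hsq : (ρ * s) ^ 2 < (1 - ρ * s) ^ 2 := by nlinarith
      rw [mul_div_assoc', div_lt_div_iff₀ (mul_pos (pow_pos h1 2) h3) (mul_pos h0 h3)]
      nlinarith [mul_lt_mul_of_pos_right hsq h3]
    have hlt := MP_integral_lt hγ
      (f := fun s => ρ ^ 2 * (s / ((1 - ρ * s) ^ 2 * (s + σ ^ 2))))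
      (g := fun s => 1 / (s * (s + σ ^ 2))) (hI1.const_mul _) hI2 hpw
    rw [integral_const_mul _ _] at hlt
    rw [heq] at hlt
    exact lt_irrefl _ hlt
  refine ⟨hpart1, ?_, ?_⟩
  -- Part 2 : strict lower bound
  · apply MP_integral_lt hγ hI3 hI4
    intro s hs
    obtain ⟨h0, h1, h2, h3, h4⟩ := hfacts s hs
    have hlt1 : (1 - ρ * s) ^ 2 < 1 := by nlinarith [mul_pos hρ0 h0]
    rw [div_lt_div_iff₀ h3 (mul_pos (pow_pos h1 2) h3)]
    nlinarith [mul_lt_mul_of_pos_left hlt1 (mul_pos (by positivity : (0:ℝ) < σ ^ 4) h3)]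
  -- Part 3 : upper bound
  · have hDv0 : 0 ≤ ∫ s, σ ^ 4 / ((1 - ρ * s) ^ 2 * (s + σ ^ 2)) ∂(MPlaw γ) := by
      apply integral_nonneg_of_ae
      apply (MP_ae_Icc hγ).mono
      intro s hs
      obtain ⟨h0, h1, h2, h3, h4⟩ := hfacts s hs
      exact div_nonneg (by positivity) (mul_pos (pow_pos h1 2) h3).le
    have hC0 : 0 ≤ ∫ s, σ ^ 4 / (s + σ ^ 2) ∂(MPlaw γ) := by
      apply integral_nonneg_of_ae
      apply (MP_ae_Icc hγ).mono
      intro s hs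
      obtain ⟨h0, h1, h2, h3, h4⟩ := hfacts s hs
      exact div_nonneg (by positivity) h3.le
    have hA : (∫ s, σ ^ 4 / ((1 - ρ * s) ^ 2 * (s + σ ^ 2)) ∂(MPlaw γ))
        ≤ σ ^ 4 / M * ∫ s, s / ((1 - ρ * s) ^ 2 * (s + σ ^ 2)) ∂(MPlaw γ) := by
      refine le_trans ?_ (le_of_eq (integral_const_mul (σ ^ 4 / M)
        (fun s => s / ((1 - ρ * s) ^ 2 * (s + σ ^ 2)))))
      apply MP_integral_le hγ hI4 (hI1.const_mul _)
      intro s hs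
      obtain ⟨h0, h1, h2, h3, h4⟩ := hfacts s hs
      have hs1' : M ≤ s := hs.1
      rw [div_mul_div_comm, div_le_div_iff₀ (mul_pos (pow_pos h1 2) h3)
        (mul_pos hM (mul_pos (pow_pos h1 2) h3))]
      nlinarith [mul_le_mul_of_nonneg_right
        (mul_le_mul_of_nonneg_left hs1' (by positivity : (0:ℝ) ≤ σ ^ 4))
        (mul_pos (pow_pos h1 2) h3).le]
    have hB : (∫ s, 1 / (s * (s + σ ^ 2)) ∂(MPlaw γ))
        ≤ 1 / (M * σ ^ 4) * ∫ s, σ ^ 4 / (s + σ ^ 2) ∂(MPlaw γ) := by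
      refine le_trans ?_ (le_of_eq (integral_const_mul (1 / (M * σ ^ 4))
        (fun s => σ ^ 4 / (s + σ ^ 2))))
      apply MP_integral_le hγ hI2 (hI3.const_mul _)
      intro s hs
      obtain ⟨h0, h1, h2, h3, h4⟩ := hfacts s hs
      have hs1' : M ≤ s := hs.1
      rw [div_mul_div_comm, div_le_div_iff₀ (mul_pos h0 h3)
        (mul_pos (mul_pos hM (by positivity : (0:ℝ) < σ ^ 4)) h3)]
      nlinarith [mul_le_mul_of_nonneg_right
        (mul_le_mul_of_nonneg_left hs1' (by positivity : (0:ℝ) ≤ σ ^ 4)) h3.le]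
    set A := ∫ s, s / ((1 - ρ * s) ^ 2 * (s + σ ^ 2)) ∂(MPlaw γ) with hAdef
    set B := ∫ s, 1 / (s * (s + σ ^ 2)) ∂(MPlaw γ) with hBdef
    set C := ∫ s, σ ^ 4 / (s + σ ^ 2) ∂(MPlaw γ) with hCdef
    set Dv := ∫ s, σ ^ 4 / ((1 - ρ * s) ^ 2 * (s + σ ^ 2)) ∂(MPlaw γ) with hDdef
    have hkey : ρ ^ 2 * Dv ≤ C / M ^ 2 := by
      have s1 : ρ ^ 2 * Dv ≤ ρ ^ 2 * (σ ^ 4 / M * A) :=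
        mul_le_mul_of_nonneg_left hA (sq_nonneg ρ)
      have s2 : ρ ^ 2 * (σ ^ 4 / M * A) = σ ^ 4 / M * (ρ ^ 2 * A) := by ring
      have s3 : σ ^ 4 / M * B ≤ σ ^ 4 / M * (1 / (M * σ ^ 4) * C) :=
        mul_le_mul_of_nonneg_left hB (by positivity)
      have s4 : σ ^ 4 / M * (1 / (M * σ ^ 4) * C) = C / M ^ 2 := by
        field_simp
      calc ρ ^ 2 * Dv ≤ σ ^ 4 / M * (ρ ^ 2 * A) := by linarith
        _ = σ ^ 4 / M * B := by rw [heq]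
        _ ≤ C / M ^ 2 := by linarith
    have hkey' : ρ ^ 2 * Dv * M ^ 2 ≤ C := (le_div_iff₀ (by positivity)).mp hkey
    have h4L : 1 ≤ 4 * L ^ 2 * ρ ^ 2 := by
      have : 1 ≤ ρ * (2 * L) := (div_le_iff₀ (by positivity)).mp hpart1
      nlinarith
    rw [div_mul_eq_mul_div, le_div_iff₀ (by positivity : (0:ℝ) < M ^ 2)]
    nlinarith [mul_le_mul_of_nonneg_left hkey' (by positivity : (0:ℝ) ≤ 4 * L ^ 2),
      mul_le_mul_of_nonneg_left h4L (mul_nonneg hDv0 (sq_nonneg M))]
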